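/- Let R be a DGA over A with R_i = 0 for i < 0, F a DG right R-module with F_i = 0 for i < 0, C_• a free graded A-module with finite basis B (degrees ≥ 0), and (m_{x,y}) a twisting cocycle for (R, C_•). Set H_0(R) := R_0/∂(R_1) (a ring) and H_0(F) := F_0/∂(F_1); the right R_0-action on F_0 descends to a right H_0(R)-module structure on H_0(F). Let C̃_• be the lifted complex and H_0(C̃_•) := C̃_0/δ(C̃_1), a left H_0(R)-module. Then the assignment α ⊗ x ↦ [α] ⊗ [x] (for α ∈ F_0 and x ∈ B with |x| = 0) induces an isomorphism of abelian groups H_0(C_*(C_•, F)) ≅ H_0(F) ⊗_{H_0(R)} H_0(C̃_•). -/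

import Mathlib

universe u v w t

/-- `(T, τ)` is a tensor product over the (possibly noncommutative) ring `H` of the right
`H`-module `M` and the left `H`-module `N`: `τ` is biadditive and balanced, its image
generates `T`, and every biadditive balanced map out of `M × N` factors uniquely through
`τ` by an additive map on `T`. -/
structure IsBalancedTensorProduct (H : Type u) [Ring H]
    (M : Type v) [AddCommGroup M] [Module Hᵐᵒᵖ M]
    (N : Type w) [AddCommGroup N] [Module H N]
    (T : Type t) [AddCommGroup T] (τ : M → N → T) : Prop where
  add_left : ∀ (m₁ m₂ : M) (n : N), τ (m₁ + m₂) n = τ m₁ n + τ m₂ n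
  add_right : ∀ (m : M) (n₁ n₂ : N), τ m (n₁ + n₂) = τ m n₁ + τ m n₂
  balanced : ∀ (m : M) (a : H) (n : N), τ (MulOpposite.op a • m) n = τ m (a • n)
  span : AddSubgroup.closure {x : T | ∃ m n, τ m n = x} = ⊤
  lift : ∀ (P : Type (max u v w t)) [AddCommGroup P] (β : M → N → P),
    (∀ (m₁ m₂ : M) (n : N), β (m₁ + m₂) n = β m₁ n + β m₂ n) →
    (∀ (m : M) (n₁ n₂ : N), β m (n₁ + n₂) = β m n₁ + β m n₂) →
    (∀ (m : M) (a : H) (n : N), β (MulOpposite.op a • m) n = β m (a • n)) →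
    ∃! φ : T →+ P, ∀ m n, φ (τ m n) = β m n

/-- For a nonnegatively graded DGA `R` with `H = H₀(R)` (realized by `cls`),
a nonnegatively graded DG right `R`-module `F` with `H₀(F)` realized by `clsF` (a right
`H`-module), a twisting cocycle `m` with lifted complex over `H` whose `H₀` is realized by
`clsC`, and the degree-zero homology `T` of the twisted complex realized by `clsT`, the
assignment `α ⊗ x ↦ [α] ⊗ [x]` induces an isomorphism of abelian groups
`H₀(C_*(C, F)) ≅ H₀(F) ⊗_{H₀(R)} H₀(C̃)`; equivalently, there is a map
`τ : H₀(F) → H₀(C̃) → T` with `τ [α] [x] = [α ⊗ x]` exhibiting `T` as the balanced tensor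
product. -/
theorem statement11
    {A : Type*} [CommRing A] {R : Type*} [Ring R] [Algebra A R]
    (ℛ : ℤ → Submodule A R) [GradedRing ℛ]
    (hRneg : ∀ i : ℤ, i < 0 → ℛ i = ⊥)
    (d : R →ₗ[A] R)
    (hd_mem : ∀ i : ℤ, ∀ a ∈ ℛ i, d a ∈ ℛ (i - 1))
    (hd_sq : ∀ a : R, d (d a) = 0)
    (hd_leibniz : ∀ i : ℤ, ∀ a ∈ ℛ i, ∀ b : R,
      d (a * b) = d a * b + (Int.negOnePow i : ℤ) • (a * d b))
    {F : Type*} [AddCommGroup F] [Module A F]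
    (ℱ : ℤ → Submodule A F) [DirectSum.Decomposition ℱ]
    (hFneg : ∀ i : ℤ, i < 0 → ℱ i = ⊥)
    (dF : F →ₗ[A] F)
    (hdF_mem : ∀ i : ℤ, ∀ f ∈ ℱ i, dF f ∈ ℱ (i - 1))
    (hdF_sq : ∀ f : F, dF (dF f) = 0)
    (act : F →ₗ[A] R →ₗ[A] F)
    (hact_one : ∀ f : F, act f 1 = f)
    (hact_mul : ∀ (f : F) (a b : R), act (act f a) b = act f (a * b))
    (hact_mem : ∀ (i j : ℤ), ∀ f ∈ ℱ i, ∀ a ∈ ℛ j, act f a ∈ ℱ (i + j))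
    (hact_leibniz : ∀ i : ℤ, ∀ f ∈ ℱ i, ∀ a : R,
      dF (act f a) = act (dF f) a + (Int.negOnePow i : ℤ) • act f (d a))
    {B : Type*} [Fintype B] [DecidableEq B]
    (deg : B → ℤ) (hdeg : ∀ x : B, 0 ≤ deg x)
    (m : B → B → R)
    (hm_mem : ∀ x y : B, m x y ∈ ℛ (deg x - deg y - 1))
    (hm_zero : ∀ x y : B, ¬ deg y < deg x → m x y = 0)
    (hm_mc : ∀ x y : B, d (m x y) =
      ∑ z : B, (Int.negOnePow (deg x - deg z) : ℤ) • (m x z * m z y))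
    (D : (B → F) →ₗ[A] (B → F))
    (hD : ∀ i : ℤ, ∀ f ∈ ℱ i, ∀ x : B,
      D (Pi.single x f) = Pi.single x (dF f) +
        (Int.negOnePow i : ℤ) • (fun y : B => act f (m x y)))
    {H : Type*} [Ring H] (cls : R →+ H)
    (hcls_gr : ∀ i : ℤ, i ≠ 0 → ∀ a ∈ ℛ i, cls a = 0)
    (hcls_one : cls 1 = 1)
    (hcls_mul : ∀ a ∈ ℛ 0, ∀ b ∈ ℛ 0, cls (a * b) = cls a * cls b)
    (hcls_surj : ∀ s : H, ∃ a ∈ ℛ 0, cls a = s)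
    (hcls_ker : ∀ a ∈ ℛ 0, (cls a = 0 ↔ ∃ u ∈ ℛ 1, a = d u))
    {HF : Type*} [AddCommGroup HF] [Module Hᵐᵒᵖ HF]
    (clsF : F → HF)
    (hclsF_add : ∀ f g : F, f ∈ ℱ 0 → g ∈ ℱ 0 → clsF (f + g) = clsF f + clsF g)
    (hclsF_surj : ∀ s : HF, ∃ f ∈ ℱ 0, clsF f = s)
    (hclsF_ker : ∀ f ∈ ℱ 0, (clsF f = 0 ↔ ∃ u ∈ ℱ 1, f = dF u))
    (hclsF_act : ∀ f ∈ ℱ 0, ∀ a ∈ ℛ 0,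
      clsF (act f a) = MulOpposite.op (cls a) • clsF f)
    {HC : Type*} [AddCommGroup HC] [Module H HC]
    (clsC : (B → H) → HC)
    (hclsC_add : ∀ f g : B → H, (∀ x : B, deg x ≠ 0 → f x = 0) →
      (∀ x : B, deg x ≠ 0 → g x = 0) → clsC (f + g) = clsC f + clsC g)
    (hclsC_smul : ∀ (a : H) (f : B → H), (∀ x : B, deg x ≠ 0 → f x = 0) →
      clsC (fun x => a * f x) = a • clsC f)
    (hclsC_surj : ∀ s : HC, ∃ f : B → H, (∀ x : B, deg x ≠ 0 → f x = 0) ∧ clsC f = s)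
    (hclsC_ker : ∀ f : B → H, (∀ x : B, deg x ≠ 0 → f x = 0) →
      (clsC f = 0 ↔ ∃ g : B → H, (∀ x : B, deg x ≠ 1 → g x = 0) ∧
        f = fun y => ∑ x : B, g x * (if deg x = deg y + 1 then cls (m x y) else 0)))
    {T : Type*} [AddCommGroup T]
    (clsT : (B → F) → T)
    (hclsT_add : ∀ c c' : B → F,
      ((∀ x : B, c x ∈ ℱ (0 - deg x)) ∧ D c = 0) →
      ((∀ x : B, c' x ∈ ℱ (0 - deg x)) ∧ D c' = 0) →
      clsT (c + c') = clsT c + clsT c')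
    (hclsT_surj : ∀ s : T, ∃ c : B → F,
      ((∀ x : B, c x ∈ ℱ (0 - deg x)) ∧ D c = 0) ∧ clsT c = s)
    (hclsT_ker : ∀ c : B → F, ((∀ x : B, c x ∈ ℱ (0 - deg x)) ∧ D c = 0) →
      (clsT c = 0 ↔ ∃ e : B → F, (∀ x : B, e x ∈ ℱ (1 - deg x)) ∧ c = D e)) :
    ∃ τ : HF → HC → T,
      (∀ f ∈ ℱ 0, ∀ x : B, deg x = 0 →
        τ (clsF f) (clsC (Pi.single x (1 : H))) = clsT (Pi.single x f)) ∧
      IsBalancedTensorProduct H HF HC T τ := by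

  classical
  -- ===== basic consequences =====
  have one_mem : (1:R) ∈ ℛ 0 := SetLike.one_mem_graded ℛ
  have mul_mem0 : ∀ {a b : R}, a ∈ ℛ 0 → b ∈ ℛ 0 → a * b ∈ ℛ 0 := by
    intro a b ha hb
    simpa using SetLike.mul_mem_graded ha hb
  have Rbot : ∀ i : ℤ, i < 0 → ∀ a ∈ ℛ i, a = 0 := by
    intro i hi a ha
    rw [hRneg i hi] at ha; simpa using ha
  have Fbot : ∀ i : ℤ, i < 0 → ∀ f ∈ ℱ i, f = 0 := by
    intro i hi f hf
    rw [hFneg i hi] at hf; simpa using hf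
  have dF0 : ∀ f ∈ ℱ 0, dF f = 0 := fun f hf =>
    Fbot (0-1) (by norm_num) _ (hdF_mem 0 f hf)
  have d0 : ∀ a ∈ ℛ 0, d a = 0 := fun a ha =>
    Rbot (0-1) (by norm_num) _ (hd_mem 0 a ha)
  have m_deg0 : ∀ x y : B, deg x = 0 → m x y = 0 := by
    intro x y hx
    exact hm_zero x y (by have := hdeg y; omega)
  have m_le : ∀ x y : B, deg x ≤ deg y → m x y = 0 := fun x y h =>
    hm_zero x y (not_lt.mpr h)
  have mem00 : ∀ f ∈ ℱ 0, ∀ a ∈ ℛ 0, act f a ∈ ℱ 0 := by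
    intro f hf a ha; simpa using hact_mem 0 0 f hf a ha
  have mem10 : ∀ f ∈ ℱ 1, ∀ a ∈ ℛ 0, act f a ∈ ℱ 1 := by
    intro f hf a ha; simpa using hact_mem 1 0 f hf a ha
  have mem01 : ∀ f ∈ ℱ 0, ∀ a ∈ ℛ 1, act f a ∈ ℱ 1 := by
    intro f hf a ha; simpa using hact_mem 0 1 f hf a ha
  have dact00 : ∀ f ∈ ℱ 0, ∀ a : R, dF (act f a) = act f (d a) := by
    intro f hf a
    have h := hact_leibniz 0 f hf a
    rw [dF0 f hf] at h
    simpa using h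
  have dact1 : ∀ u ∈ ℱ 1, ∀ a ∈ ℛ 0, dF (act u a) = act (dF u) a := by
    intro u hu a ha
    have h := hact_leibniz 1 u hu a
    rw [d0 a ha] at h
    simpa using h
  have clsF_zero : clsF 0 = 0 := by
    have h := hclsF_add 0 0 (zero_mem _) (zero_mem _)
    rw [add_zero] at h
    exact left_eq_add.mp h
  have clsC_zero : clsC 0 = 0 := by
    have h := hclsC_add 0 0 (fun _ _ => rfl) (fun _ _ => rfl)
    rw [add_zero] at h
    exact left_eq_add.mp h
  -- cycle predicate facts
  have cyc_of_mem : ∀ c : B → F, (∀ x, c x ∈ ℱ (0 - deg x)) → D c = 0 := by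
    intro c hc
    have hc' : c = ∑ x : B, Pi.single x (c x) := (Finset.univ_sum_single c).symm
    rw [hc', map_sum]
    apply Finset.sum_eq_zero
    intro x _
    by_cases hx : deg x = 0
    · have hmem : c x ∈ ℱ 0 := by have := hc x; rwa [hx, sub_zero] at this
      have h := hD 0 (c x) hmem x
      rw [dF0 _ hmem] at h
      have hm' : (fun y : B => act (c x) (m x y)) = 0 := by
        funext y; rw [m_deg0 x y hx]; simp
      rw [h, hm']
      simp
    · have : c x = 0 := Fbot _ (by have := hdeg x; omega) _ (hc x)
      rw [this]
      simp
  have clsT_zero : clsT 0 = 0 := by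
    have hcyc : ((∀ x : B, (0 : B → F) x ∈ ℱ (0 - deg x)) ∧ D 0 = 0) :=
      ⟨fun x => zero_mem _, map_zero D⟩
    have h := hclsT_add 0 0 hcyc hcyc
    rw [add_zero] at h
    exact left_eq_add.mp h
  have cyc_add : ∀ c c' : B → F,
      ((∀ x : B, c x ∈ ℱ (0 - deg x)) ∧ D c = 0) →
      ((∀ x : B, c' x ∈ ℱ (0 - deg x)) ∧ D c' = 0) →
      ((∀ x : B, (c + c') x ∈ ℱ (0 - deg x)) ∧ D (c + c') = 0) := by
    intro c c' hc hc'
    exact ⟨fun x => add_mem (hc.1 x) (hc'.1 x), by rw [map_add, hc.2, hc'.2, add_zero]⟩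
  have cyc_sub : ∀ c c' : B → F,
      ((∀ x : B, c x ∈ ℱ (0 - deg x)) ∧ D c = 0) →
      ((∀ x : B, c' x ∈ ℱ (0 - deg x)) ∧ D c' = 0) →
      ((∀ x : B, (c - c') x ∈ ℱ (0 - deg x)) ∧ D (c - c') = 0) := by
    intro c c' hc hc'
    exact ⟨fun x => sub_mem (hc.1 x) (hc'.1 x), by rw [map_sub, hc.2, hc'.2, sub_zero]⟩
  have clsT_add_eq : ∀ c c' : B → F,
      ((∀ x : B, c x ∈ ℱ (0 - deg x)) ∧ D c = 0) →
      ((∀ x : B, c' x ∈ ℱ (0 - deg x)) ∧ D c' = 0) →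
      clsT c = clsT (c - c') + clsT c' := by
    intro c c' hc hc'
    have := hclsT_add (c - c') c' (cyc_sub c c' hc hc') hc'
    rwa [sub_add_cancel] at this
  have clsT_eq_of_bdry : ∀ c c' : B → F,
      ((∀ x : B, c x ∈ ℱ (0 - deg x)) ∧ D c = 0) →
      ((∀ x : B, c' x ∈ ℱ (0 - deg x)) ∧ D c' = 0) →
      (∃ e : B → F, (∀ x : B, e x ∈ ℱ (1 - deg x)) ∧ c - c' = D e) →
      clsT c = clsT c' := by
    intro c c' hc hc' he
    have h0 : clsT (c - c') = 0 := (hclsT_ker _ (cyc_sub c c' hc hc')).mpr he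
    rw [clsT_add_eq c c' hc hc', h0, zero_add]
  -- ===== boundary computations =====
  have E1 : ∀ u : B → F, (∀ x, deg x = 0 → u x ∈ ℱ 1) → (∀ x, deg x ≠ 0 → u x = 0) →
      D u = fun y => dF (u y) := by
    intro u h1 h0
    calc D u = D (∑ x : B, Pi.single x (u x)) := by rw [Finset.univ_sum_single]
      _ = ∑ x : B, D (Pi.single x (u x)) := map_sum D _ _
      _ = ∑ x : B, Pi.single x (dF (u x)) := by
          apply Finset.sum_congr rfl
          intro x _
          by_cases hx : deg x = 0
          · have h := hD 1 (u x) (h1 x hx) x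
            have hm' : (fun y : B => act (u x) (m x y)) = 0 := by
              funext y; rw [m_deg0 x y hx]; simp
            rw [h, hm']
            simp
          · rw [h0 x hx]
            simp
      _ = fun y => dF (u y) := Finset.univ_sum_single _
  have E2 : ∀ g : B → F, (∀ x, deg x = 1 → g x ∈ ℱ 0) → (∀ x, deg x ≠ 1 → g x = 0) →
      D g = fun y => ∑ x : B, act (g x) (m x y) := by
    intro g h1 h0
    calc D g = D (∑ x : B, Pi.single x (g x)) := by rw [Finset.univ_sum_single]
      _ = ∑ x : B, D (Pi.single x (g x)) := map_sum D _ _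
      _ = ∑ x : B, (fun y => act (g x) (m x y)) := by
          apply Finset.sum_congr rfl
          intro x _
          by_cases hx : deg x = 1
          · have h := hD 0 (g x) (h1 x hx) x
            rw [dF0 _ (h1 x hx)] at h
            rw [h]
            simp
          · rw [h0 x hx]
            funext y
            simp
      _ = fun y => ∑ x : B, act (g x) (m x y) := by
          funext y
          simp [Finset.sum_apply]
  -- ===== finite additivity lemmas =====
  have sumF : ∀ (s : Finset B) (w : B → F), (∀ i, w i ∈ ℱ 0) →
      clsF (∑ i ∈ s, w i) = ∑ i ∈ s, clsF (w i) := by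
    intro s w hw
    induction s using Finset.cons_induction with
    | empty => simpa using clsF_zero
    | cons a s ha ih =>
      rw [Finset.sum_cons, Finset.sum_cons,
        hclsF_add _ _ (hw a) (Submodule.sum_mem _ fun i _ => hw i), ih]
  have sumC : ∀ (s : Finset B) (u : B → (B → H)), (∀ i, ∀ x, deg x ≠ 0 → u i x = 0) →
      clsC (∑ i ∈ s, u i) = ∑ i ∈ s, clsC (u i) := by
    intro s u hu
    induction s using Finset.cons_induction with
    | empty => simpa using clsC_zero
    | cons a s ha ih =>
      have hsum : ∀ x, deg x ≠ 0 → (∑ i ∈ s, u i) x = 0 := by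
        intro x hx
        rw [Finset.sum_apply]
        exact Finset.sum_eq_zero fun i _ => hu i x hx
      rw [Finset.sum_cons, Finset.sum_cons, hclsC_add _ _ (hu a) hsum, ih]
  have cyc_sum : ∀ (s : Finset B) (v : B → (B → F)),
      (∀ i, (∀ x : B, v i x ∈ ℱ (0 - deg x)) ∧ D (v i) = 0) →
      ((∀ x : B, (∑ i ∈ s, v i) x ∈ ℱ (0 - deg x)) ∧ D (∑ i ∈ s, v i) = 0) := by
    intro s v hv
    constructor
    · intro x
      rw [Finset.sum_apply]
      exact Submodule.sum_mem _ fun i _ => (hv i).1 x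
    · rw [map_sum]
      exact Finset.sum_eq_zero fun i _ => (hv i).2
  have sumT : ∀ (s : Finset B) (v : B → (B → F)),
      (∀ i, (∀ x : B, v i x ∈ ℱ (0 - deg x)) ∧ D (v i) = 0) →
      clsT (∑ i ∈ s, v i) = ∑ i ∈ s, clsT (v i) := by
    intro s v hv
    induction s using Finset.cons_induction with
    | empty => simpa using clsT_zero
    | cons a s ha ih =>
      rw [Finset.sum_cons, Finset.sum_cons,
        hclsT_add _ _ (hv a) (cyc_sum s v hv), ih]
  -- ===== choices of representatives =====
  choose repH hrepH0 hrepHcls using hcls_surj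
  choose repF hrepF0 hrepFcls using hclsF_surj
  choose repC hrepC using hclsC_surj
  have hrepCsupp : ∀ t, ∀ x, deg x ≠ 0 → repC t x = 0 := fun t => (hrepC t).1
  have hrepCcls : ∀ t, clsC (repC t) = t := fun t => (hrepC t).2
  choose repT hrepT using hclsT_surj
  have hrepTcyc : ∀ t, (∀ x : B, repT t x ∈ ℱ (0 - deg x)) ∧ D (repT t) = 0 :=
    fun t => (hrepT t).1
  have hrepTcls : ∀ t, clsT (repT t) = t := fun t => (hrepT t).2
  -- the chain associated to f and coefficients a
  have chain_cyc : ∀ (f : F) (a : B → R), f ∈ ℱ 0 → (∀ y, a y ∈ ℛ 0) →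
      ((∀ x : B, (fun y => if deg y = 0 then act f (a y) else 0) x ∈ ℱ (0 - deg x)) ∧
        D (fun y => if deg y = 0 then act f (a y) else 0) = 0) := by
    intro f a hf ha
    have hmem : ∀ x : B, (if deg x = 0 then act f (a x) else 0) ∈ ℱ (0 - deg x) := by
      intro x
      by_cases hx : deg x = 0
      · rw [if_pos hx, hx, sub_zero]
        exact mem00 f hf (a x) (ha x)
      · rw [if_neg hx]
        exact zero_mem _
    exact ⟨hmem, cyc_of_mem _ hmem⟩
  -- W1 : change the F-representative
  have W1 : ∀ (f f' : F) (a : B → R), f ∈ ℱ 0 → f' ∈ ℱ 0 → (∀ y, a y ∈ ℛ 0) →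
      clsF f = clsF f' →
      clsT (fun y => if deg y = 0 then act f (a y) else 0) =
        clsT (fun y => if deg y = 0 then act f' (a y) else 0) := by
    intro f f' a hf hf' ha hcl
    have hsub0 : clsF (f - f') = 0 := by
      have h := hclsF_add (f - f') f' (sub_mem hf hf') hf'
      rw [sub_add_cancel, hcl] at h
      exact (right_eq_add.mp h)
    obtain ⟨u, hu1, hu2⟩ := (hclsF_ker _ (sub_mem hf hf')).mp hsub0
    apply clsT_eq_of_bdry _ _ (chain_cyc f a hf ha) (chain_cyc f' a hf' ha)
    refine ⟨fun y => if deg y = 0 then act u (a y) else 0, ?_, ?_⟩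
    · intro x
      beta_reduce
      by_cases hx : deg x = 0
      · rw [if_pos hx, hx, sub_zero]
        exact mem10 u hu1 (a x) (ha x)
      · rw [if_neg hx]
        exact zero_mem _
    · rw [E1 _ (fun x hx => by rw [if_pos hx]; exact mem10 u hu1 (a x) (ha x))
        (fun x hx => by rw [if_neg hx])]
      funext y
      by_cases hy : deg y = 0
      · simp only [Pi.sub_apply, if_pos hy]
        rw [dact1 u hu1 (a y) (ha y), ← hu2]
        rw [map_sub act]
        rfl
      · simp only [Pi.sub_apply, if_neg hy]
        simp
  -- W2 : change the coefficient lift (same classes)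
  have W2 : ∀ (f : F) (a a' : B → R), f ∈ ℱ 0 → (∀ y, a y ∈ ℛ 0) → (∀ y, a' y ∈ ℛ 0) →
      (∀ y, deg y = 0 → cls (a y) = cls (a' y)) →
      clsT (fun y => if deg y = 0 then act f (a y) else 0) =
        clsT (fun y => if deg y = 0 then act f (a' y) else 0) := by
    intro f a a' hf ha ha' hcl
    have key : ∀ y, deg y = 0 → ∃ u ∈ ℛ 1, a y - a' y = d u := by
      intro y hy
      apply (hcls_ker _ (sub_mem (ha y) (ha' y))).mp
      rw [map_sub, hcl y hy, sub_self]
    choose! uu huu1 huu2 using key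
    apply clsT_eq_of_bdry _ _ (chain_cyc f a hf ha) (chain_cyc f a' hf ha')
    refine ⟨fun y => if deg y = 0 then act f (uu y) else 0, ?_, ?_⟩
    · intro x
      beta_reduce
      by_cases hx : deg x = 0
      · rw [if_pos hx, hx, sub_zero]
        exact mem01 f hf (uu x) (huu1 x hx)
      · rw [if_neg hx]
        exact zero_mem _
    · rw [E1 _ (fun x hx => by rw [if_pos hx]; exact mem01 f hf (uu x) (huu1 x hx))
        (fun x hx => by rw [if_neg hx])]
      funext y
      by_cases hy : deg y = 0
      · simp only [Pi.sub_apply, if_pos hy]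
        rw [dact00 f hf (uu y), ← huu2 y hy, map_sub]
      · simp only [Pi.sub_apply, if_neg hy]
        simp
  -- W3 : chains whose coefficient class vanishes are boundaries
  have W3 : ∀ (f : F) (b : B → R), f ∈ ℱ 0 → (∀ y, b y ∈ ℛ 0) →
      clsC (fun y => if deg y = 0 then cls (b y) else 0) = 0 →
      clsT (fun y => if deg y = 0 then act f (b y) else 0) = 0 := by
    intro f b hf hb h0
    obtain ⟨g, hg1, hg2⟩ := (hclsC_ker _ (fun x hx => if_neg hx)).mp h0
    -- a' y = sum over x of lifts
    set a' : B → R := fun y => ∑ x : B, if deg x = 1 then repH (g x) * m x y else 0 with ha'def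
    have ha' : ∀ y, a' y ∈ ℛ 0 := by
      intro y
      apply Submodule.sum_mem
      intro x _
      by_cases hx : deg x = 1
      · rw [if_pos hx]
        by_cases hy : deg y = 0
        · have hmxy : m x y ∈ ℛ 0 := by
            have := hm_mem x y
            rwa [hx, hy] at this
          exact mul_mem0 (hrepH0 _) hmxy
        · rw [m_le x y (by have := hdeg y; omega), mul_zero]
          exact zero_mem _
      · rw [if_neg hx]
        exact zero_mem _
    have hcls_a' : ∀ y, deg y = 0 → cls (b y) = cls (a' y) := by
      intro y hy
      have hby : (if deg y = 0 then cls (b y) else 0) =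
          ∑ x : B, g x * (if deg x = deg y + 1 then cls (m x y) else 0) :=
        congrFun hg2 y
      rw [if_pos hy] at hby
      rw [hby, ha'def]
      rw [map_sum]
      apply Finset.sum_congr rfl
      intro x _
      by_cases hx : deg x = 1
      · rw [if_pos hx, if_pos (by omega)]
        have hmxy : m x y ∈ ℛ 0 := by
          have := hm_mem x y
          rwa [hx, hy] at this
        rw [hcls_mul _ (hrepH0 _) _ hmxy, hrepHcls]
      · rw [if_neg hx, if_neg (by omega), mul_zero, map_zero]
    rw [W2 f b a' hf hb ha' hcls_a']
    -- now show the chain with coefficients a' is a boundary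
    apply (hclsT_ker _ (chain_cyc f a' hf ha')).mpr
    refine ⟨fun x => if deg x = 1 then act f (repH (g x)) else 0, ?_, ?_⟩
    · intro x
      beta_reduce
      by_cases hx : deg x = 1
      · rw [if_pos hx, hx]
        simpa using mem00 f hf _ (hrepH0 (g x))
      · rw [if_neg hx]
        exact zero_mem _
    · rw [E2 _ (fun x hx => by rw [if_pos hx]; exact mem00 f hf _ (hrepH0 (g x)))
        (fun x hx => by rw [if_neg hx])]
      funext y
      by_cases hy : deg y = 0
      · rw [if_pos hy, ha'def]
        simp only
        rw [map_sum (act f)]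
        apply Finset.sum_congr rfl
        intro x _
        by_cases hx : deg x = 1
        · rw [if_pos hx, if_pos hx, hact_mul]
        · rw [if_neg hx, if_neg hx, map_zero]
          simp
      · rw [if_neg hy]
        symm
        apply Finset.sum_eq_zero
        intro x _
        by_cases hx : deg x = 1
        · rw [if_pos hx, m_le x y (by have := hdeg y; omega), map_zero]
        · rw [if_neg hx]
          simp
  -- master comparison lemma
  have Wmaster : ∀ (f f' : F) (a a' : B → R), f ∈ ℱ 0 → f' ∈ ℱ 0 →
      (∀ y, a y ∈ ℛ 0) → (∀ y, a' y ∈ ℛ 0) → clsF f = clsF f' →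
      clsC (fun y => if deg y = 0 then cls (a y) else 0) =
        clsC (fun y => if deg y = 0 then cls (a' y) else 0) →
      clsT (fun y => if deg y = 0 then act f (a y) else 0) =
        clsT (fun y => if deg y = 0 then act f' (a' y) else 0) := by
    intro f f' a a' hf hf' ha ha' hclf hclc
    rw [W1 f f' a hf hf' ha hclf]
    -- now compare coefficients over f'
    have hbmem : ∀ y, a y - a' y ∈ ℛ 0 := fun y => sub_mem (ha y) (ha' y)
    have hzero : clsC (fun y => if deg y = 0 then cls (a y - a' y) else 0) = 0 := by
      have hsplit : (fun y => if deg y = 0 then cls (a y) else 0) =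
          (fun y => if deg y = 0 then cls (a y - a' y) else 0) +
          (fun y => if deg y = 0 then cls (a' y) else 0) := by
        funext y
        by_cases hy : deg y = 0
        · simp only [Pi.add_apply, if_pos hy, map_sub]
          abel
        · simp [if_neg hy]
      have := hclsC_add (fun y => if deg y = 0 then cls (a y - a' y) else 0)
        (fun y => if deg y = 0 then cls (a' y) else 0)
        (fun x hx => if_neg hx) (fun x hx => if_neg hx)
      rw [← hsplit, hclc] at this
      exact (right_eq_add.mp this)
    have hW3 := W3 f' (fun y => a y - a' y) hf' hbmem hzero
    have hsplit2 : (fun y => if deg y = 0 then act f' (a y) else 0) =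
        (fun y => if deg y = 0 then act f' (a y - a' y) else 0) +
        (fun y => if deg y = 0 then act f' (a' y) else 0) := by
      funext y
      by_cases hy : deg y = 0
      · simp only [Pi.add_apply, if_pos hy, map_sub]
        abel
      · simp [if_neg hy]
    rw [hsplit2, hclsT_add _ _ (chain_cyc f' _ hf' hbmem) (chain_cyc f' a' hf' ha'),
      hW3, zero_add]
  -- ===== the map τ =====
  have cfa0 : ∀ t : HC,
      (fun y => if deg y = 0 then cls (repH (repC t y)) else 0) = repC t := by
    intro t
    funext y
    by_cases hy : deg y = 0
    · rw [if_pos hy, hrepHcls]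
    · rw [if_neg hy, hrepCsupp t y hy]
  have Mτ : ∀ (s : HF) (t : HC) (f : F) (a : B → R), f ∈ ℱ 0 → (∀ y, a y ∈ ℛ 0) →
      clsF f = s →
      clsC (fun y => if deg y = 0 then cls (a y) else 0) = t →
      clsT (fun y => if deg y = 0 then act (repF s) (repH (repC t y)) else 0) =
        clsT (fun y => if deg y = 0 then act f (a y) else 0) := by
    intro s t f a hf ha hs ht
    apply Wmaster _ _ _ _ (hrepF0 s) hf (fun y => hrepH0 _) ha
    · rw [hrepFcls, hs]
    · rw [cfa0, hrepCcls, ht]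
  -- the defining property on basis elements
  have prop1 : ∀ f ∈ ℱ 0, ∀ x : B, deg x = 0 →
      clsT (fun y => if deg y = 0 then
        act (repF (clsF f)) (repH (repC (clsC (Pi.single x (1 : H))) y)) else 0) =
      clsT (Pi.single x f) := by
    intro f hf x hx
    have hamem : ∀ y : B, (if y = x then (1:R) else 0) ∈ ℛ 0 := by
      intro y
      by_cases h : y = x
      · rw [if_pos h]; exact one_mem
      · rw [if_neg h]; exact zero_mem _
    have hcf : (fun y => if deg y = 0 then cls (if y = x then (1:R) else 0) else 0) =
        Pi.single x (1 : H) := by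
      funext y
      rw [Pi.single_apply]
      by_cases hy : deg y = 0
      · rw [if_pos hy]
        by_cases h : y = x
        · rw [if_pos h, if_pos h, hcls_one]
        · rw [if_neg h, if_neg h, map_zero]
      · rw [if_neg hy, if_neg (by rintro rfl; exact hy hx)]
    have := Mτ (clsF f) (clsC (Pi.single x (1 : H))) f
      (fun y => if y = x then (1:R) else 0) hf hamem rfl (by rw [hcf])
    rw [this]
    congr 1
    funext y
    beta_reduce
    rw [Pi.single_apply]
    by_cases hy : deg y = 0
    · rw [if_pos hy]
      by_cases h : y = x
      · rw [if_pos h, if_pos h, hact_one]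
      · rw [if_neg h, if_neg h, map_zero]
    · rw [if_neg hy, if_neg (by rintro rfl; exact hy hx)]
  refine ⟨fun s t => clsT (fun y => if deg y = 0 then
      act (repF s) (repH (repC t y)) else 0), fun f hf x hx => prop1 f hf x hx, ?_⟩
  -- span fact
  have hspan : AddSubgroup.closure {x : T | ∃ s t, clsT (fun y => if deg y = 0 then
      act (repF s) (repH (repC t y)) else 0) = x} = ⊤ := by
    rw [eq_top_iff]
    intro t _
    have hc := hrepTcyc t
    have hcycx : ∀ x : B, (∀ w : B, (Pi.single x (repT t x) : B → F) w ∈ ℱ (0 - deg w)) ∧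
        D (Pi.single x (repT t x)) = 0 := by
      intro x
      have hmem : ∀ w : B, (Pi.single x (repT t x) : B → F) w ∈ ℱ (0 - deg w) := by
        intro w
        rw [Pi.single_apply]
        by_cases hw : w = x
        · rw [if_pos hw, hw]
          exact hc.1 x
        · rw [if_neg hw]
          exact zero_mem _
      exact ⟨hmem, cyc_of_mem _ hmem⟩
    have h1 : t = ∑ x : B, clsT (Pi.single x (repT t x)) := by
      rw [← sumT Finset.univ _ hcycx, Finset.univ_sum_single, hrepTcls]
    rw [h1]
    apply AddSubgroup.sum_mem
    intro x _
    by_cases hx : deg x = 0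
    · apply AddSubgroup.subset_closure
      refine ⟨clsF (repT t x), clsC (Pi.single x (1:H)), ?_⟩
      exact prop1 (repT t x) (by have := hc.1 x; rwa [hx, sub_zero] at this) x hx
    · have h0 : repT t x = 0 := Fbot _ (by have := hdeg x; omega) _ (hc.1 x)
      rw [h0, Pi.single_zero, clsT_zero]
      exact zero_mem _
  constructor
  -- add_left
  · intro s₁ s₂ t
    have hf : repF s₁ + repF s₂ ∈ ℱ 0 := add_mem (hrepF0 s₁) (hrepF0 s₂)
    have h1 := Mτ (s₁ + s₂) t (repF s₁ + repF s₂) (fun y => repH (repC t y)) hf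
      (fun y => hrepH0 _)
      (by rw [hclsF_add _ _ (hrepF0 s₁) (hrepF0 s₂), hrepFcls, hrepFcls])
      (by rw [cfa0, hrepCcls])
    show clsT _ = clsT _ + clsT _
    rw [h1]
    have hsplit : (fun y => if deg y = 0 then act (repF s₁ + repF s₂) (repH (repC t y)) else 0) =
        (fun y => if deg y = 0 then act (repF s₁) (repH (repC t y)) else 0) +
        (fun y => if deg y = 0 then act (repF s₂) (repH (repC t y)) else 0) := by
      funext y
      by_cases hy : deg y = 0
      · simp only [Pi.add_apply, if_pos hy, map_add, LinearMap.add_apply]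
      · simp [if_neg hy]
    rw [hsplit, hclsT_add _ _ (chain_cyc _ _ (hrepF0 s₁) fun y => hrepH0 _)
      (chain_cyc _ _ (hrepF0 s₂) fun y => hrepH0 _)]
  -- add_right
  · intro s t₁ t₂
    have ha : ∀ y, repH (repC t₁ y) + repH (repC t₂ y) ∈ ℛ 0 :=
      fun y => add_mem (hrepH0 _) (hrepH0 _)
    have hcf : (fun y => if deg y = 0 then cls (repH (repC t₁ y) + repH (repC t₂ y)) else 0) =
        repC t₁ + repC t₂ := by
      funext y
      by_cases hy : deg y = 0
      · rw [if_pos hy, map_add, hrepHcls, hrepHcls]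
        rfl
      · rw [if_neg hy, Pi.add_apply, hrepCsupp t₁ y hy, hrepCsupp t₂ y hy, add_zero]
    have h1 := Mτ s (t₁ + t₂) (repF s) (fun y => repH (repC t₁ y) + repH (repC t₂ y))
      (hrepF0 s) ha (hrepFcls s)
      (by rw [hcf, hclsC_add _ _ (hrepCsupp t₁) (hrepCsupp t₂), hrepCcls, hrepCcls])
    show clsT _ = clsT _ + clsT _
    rw [h1]
    have hsplit : (fun y => if deg y = 0 then
          act (repF s) (repH (repC t₁ y) + repH (repC t₂ y)) else 0) =
        (fun y => if deg y = 0 then act (repF s) (repH (repC t₁ y)) else 0) +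
        (fun y => if deg y = 0 then act (repF s) (repH (repC t₂ y)) else 0) := by
      funext y
      by_cases hy : deg y = 0
      · simp only [Pi.add_apply, if_pos hy, map_add]
      · simp [if_neg hy]
    rw [hsplit, hclsT_add _ _ (chain_cyc _ _ (hrepF0 s) fun y => hrepH0 _)
      (chain_cyc _ _ (hrepF0 s) fun y => hrepH0 _)]
  -- balanced
  · intro s h t
    have hfmem : act (repF s) (repH h) ∈ ℱ 0 := mem00 _ (hrepF0 s) _ (hrepH0 h)
    have hL := Mτ (MulOpposite.op h • s) t (act (repF s) (repH h)) (fun y => repH (repC t y))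
      hfmem (fun y => hrepH0 _)
      (by rw [hclsF_act _ (hrepF0 s) _ (hrepH0 h), hrepHcls, hrepFcls])
      (by rw [cfa0, hrepCcls])
    have haR : ∀ y, repH h * repH (repC t y) ∈ ℛ 0 :=
      fun y => mul_mem0 (hrepH0 h) (hrepH0 _)
    have hcf : (fun y => if deg y = 0 then cls (repH h * repH (repC t y)) else 0) =
        (fun y => h * repC t y) := by
      funext y
      by_cases hy : deg y = 0
      · rw [if_pos hy, hcls_mul _ (hrepH0 h) _ (hrepH0 _), hrepHcls, hrepHcls]
      · rw [if_neg hy, hrepCsupp t y hy, mul_zero]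
    have hR := Mτ s (h • t) (repF s) (fun y => repH h * repH (repC t y)) (hrepF0 s) haR
      (hrepFcls s)
      (by rw [hcf, hclsC_smul h (repC t) (hrepCsupp t), hrepCcls])
    show clsT _ = clsT _
    rw [hL, hR]
    congr 1
    funext y
    by_cases hy : deg y = 0
    · rw [if_pos hy, if_pos hy, hact_mul]
    · rw [if_neg hy, if_neg hy]
  -- span
  · exact hspan
  -- lift
  · intro P _ β hβl hβr hβbal
    have β0l : ∀ n, β 0 n = 0 := by
      intro n
      have h := hβl 0 0 n
      rw [add_zero] at h
      exact left_eq_add.mp h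
    have β0r : ∀ mm, β mm 0 = 0 := by
      intro mm
      have h := hβr mm 0 0
      rw [add_zero] at h
      exact left_eq_add.mp h
    have βsuml : ∀ (s : Finset B) (w : B → HF) (n : HC),
        β (∑ i ∈ s, w i) n = ∑ i ∈ s, β (w i) n := by
      intro s w n
      induction s using Finset.cons_induction with
      | empty => simpa using β0l n
      | cons a s ha ih => rw [Finset.sum_cons, Finset.sum_cons, hβl, ih]
    have βsumr : ∀ (s : Finset B) (mm : HF) (n : B → HC),
        β mm (∑ i ∈ s, n i) = ∑ i ∈ s, β mm (n i) := by
      intro s mm n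
      induction s using Finset.cons_induction with
      | empty => simpa using β0r mm
      | cons a s ha ih => rw [Finset.sum_cons, Finset.sum_cons, hβr, ih]
    -- descended evaluation on chains
    set Bm : (B → F) → P := fun c => ∑ x : B, β (clsF (c x)) (clsC (Pi.single x (1:H)))
      with hBm
    have Bm_add : ∀ c c' : B → F,
        ((∀ x : B, c x ∈ ℱ (0 - deg x)) ∧ D c = 0) →
        ((∀ x : B, c' x ∈ ℱ (0 - deg x)) ∧ D c' = 0) →
        Bm (c + c') = Bm c + Bm c' := by
      intro c c' hc hc'
      simp only [hBm]
      rw [← Finset.sum_add_distrib]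
      apply Finset.sum_congr rfl
      intro x _
      by_cases hx : deg x = 0
      · have h1 : c x ∈ ℱ 0 := by have := hc.1 x; rwa [hx, sub_zero] at this
        have h2 : c' x ∈ ℱ 0 := by have := hc'.1 x; rwa [hx, sub_zero] at this
        rw [Pi.add_apply, hclsF_add _ _ h1 h2, hβl]
      · have h1 : c x = 0 := Fbot _ (by have := hdeg x; omega) _ (hc.1 x)
        have h2 : c' x = 0 := Fbot _ (by have := hdeg x; omega) _ (hc'.1 x)
        simp [h1, h2, clsF_zero, β0l]
    -- the coefficient classes of the twisting cocycle give zero in HC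
    have Z : ∀ x : B, deg x = 1 →
        (∑ y : B, cls (m x y) • clsC (Pi.single y (1:H))) = 0 := by
      intro x hx
      have hper : ∀ y : B,
          cls (m x y) • clsC (Pi.single y (1:H)) = clsC (Pi.single y (cls (m x y))) := by
        intro y
        by_cases hy : deg y = 0
        · rw [← hclsC_smul (cls (m x y)) (Pi.single y (1:H))
            (fun w hw => by rw [Pi.single_apply, if_neg (by rintro rfl; exact hw hy)])]
          congr 1
          funext w
          rw [Pi.single_apply, Pi.single_apply, mul_ite, mul_one, mul_zero]
        · rw [m_le x y (by have := hdeg y; omega), map_zero, zero_smul,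
            Pi.single_zero, clsC_zero]
      have hsupp : ∀ i w : B, deg w ≠ 0 → (Pi.single i (cls (m x i)) : B → H) w = 0 := by
        intro i w hw
        rw [Pi.single_apply]
        by_cases h : w = i
        · subst h
          rw [if_pos rfl, m_le x w (by have := hdeg w; omega), map_zero]
        · rw [if_neg h]
      calc ∑ y : B, cls (m x y) • clsC (Pi.single y (1:H))
          = ∑ y : B, clsC (Pi.single y (cls (m x y))) :=
            Finset.sum_congr rfl (fun y _ => hper y)
        _ = clsC (∑ y : B, Pi.single y (cls (m x y))) :=
            (sumC Finset.univ _ hsupp).symm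
        _ = clsC (fun y => cls (m x y)) := by rw [Finset.univ_sum_single]
        _ = 0 := by
            apply (hclsC_ker _ (fun w hw => by
              rw [m_le x w (by have := hdeg w; omega), map_zero])).mpr
            refine ⟨Pi.single x (1:H),
              fun w hw => by rw [Pi.single_apply, if_neg (by rintro rfl; exact hw hx)], ?_⟩
            funext y
            have hterm : ∀ z : B, (Pi.single x (1:H) : B → H) z *
                (if deg z = deg y + 1 then cls (m z y) else 0) =
                if z = x then (if deg x = deg y + 1 then cls (m x y) else 0) else 0 := by
              intro z
              rw [Pi.single_apply]
              by_cases h : z = x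
              · rw [if_pos h, if_pos h, one_mul, h]
              · rw [if_neg h, if_neg h, zero_mul]
            rw [Finset.sum_congr rfl (fun z _ => hterm z),
              Finset.sum_ite_eq' Finset.univ x _, if_pos (Finset.mem_univ x)]
            by_cases hy : deg y = 0
            · rw [if_pos (by omega)]
            · rw [if_neg (by omega), m_le x y (by have := hdeg y; omega), map_zero]
    -- Bm vanishes on boundaries
    have Bm_bdry : ∀ e : B → F, (∀ x, e x ∈ ℱ (1 - deg x)) → Bm (D e) = 0 := by
      intro e he
      have he01 : e = (fun x => if deg x = 0 then e x else 0) +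
          (fun x => if deg x = 1 then e x else 0) := by
        funext x
        simp only [Pi.add_apply]
        by_cases h0 : deg x = 0
        · rw [if_pos h0, if_neg (by omega), add_zero]
        · by_cases h1 : deg x = 1
          · rw [if_neg h0, if_pos h1, zero_add]
          · rw [if_neg h0, if_neg h1, add_zero]
            exact Fbot _ (by have := hdeg x; omega) _ (he x)
      have hDe0 : D (fun x => if deg x = 0 then e x else 0) =
          fun y => dF (if deg y = 0 then e y else 0) := by
        rw [E1 _ (fun x hx => by rw [if_pos hx]; have := he x; rwa [hx] at this)
          (fun x hx => if_neg hx)]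
      have hDe1 : D (fun x => if deg x = 1 then e x else 0) =
          fun y => ∑ x : B, act (if deg x = 1 then e x else 0) (m x y) := by
        rw [E2 _ (fun x hx => by
            rw [if_pos hx]; have := he x; rw [hx] at this; simpa using this)
          (fun x hx => if_neg hx)]
      have memterm : ∀ x y : B, act (if deg x = 1 then e x else 0) (m x y) ∈ ℱ 0 := by
        intro x y
        by_cases hx : deg x = 1
        · by_cases hy : deg y = 0
          · have hex : e x ∈ ℱ 0 := by have := he x; rw [hx] at this; simpa using this
            have hmxy : m x y ∈ ℛ 0 := by have := hm_mem x y; rwa [hx, hy] at this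
            rw [if_pos hx]
            exact mem00 _ hex _ hmxy
          · rw [m_le x y (by have := hdeg y; omega), map_zero]
            exact zero_mem _
        · rw [if_neg hx, map_zero, LinearMap.zero_apply]
          exact zero_mem _
      have key : ∀ y : B, clsF ((D e) y) =
          ∑ x : B, clsF (act (if deg x = 1 then e x else 0) (m x y)) := by
        intro y
        have hy1 : (if deg y = 0 then e y else 0) ∈ ℱ 1 := by
          by_cases hy : deg y = 0
          · rw [if_pos hy]; have := he y; rwa [hy] at this
          · rw [if_neg hy]; exact zero_mem _
        have hmem1 : dF (if deg y = 0 then e y else 0) ∈ ℱ 0 := by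
          simpa using hdF_mem 1 _ hy1
        have h1 : (D e) y = dF (if deg y = 0 then e y else 0) +
            ∑ x : B, act (if deg x = 1 then e x else 0) (m x y) := by
          conv_lhs => rw [he01]
          rw [map_add, Pi.add_apply, hDe0, hDe1]
        rw [h1, hclsF_add _ _ hmem1 (Submodule.sum_mem _ fun x _ => memterm x y),
          (hclsF_ker _ hmem1).mpr ⟨(if deg y = 0 then e y else 0), hy1, rfl⟩,
          zero_add, sumF Finset.univ _ (fun x => memterm x y)]
      simp only [hBm]
      calc ∑ y : B, β (clsF ((D e) y)) (clsC (Pi.single y (1:H)))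
          = ∑ y : B, ∑ x : B, β (clsF (act (if deg x = 1 then e x else 0) (m x y)))
              (clsC (Pi.single y (1:H))) :=
            Finset.sum_congr rfl (fun y _ => by rw [key y, βsuml])
        _ = ∑ x : B, ∑ y : B, β (clsF (act (if deg x = 1 then e x else 0) (m x y)))
              (clsC (Pi.single y (1:H))) := Finset.sum_comm
        _ = 0 := by
            apply Finset.sum_eq_zero
            intro x _
            by_cases hx : deg x = 1
            · have hex : e x ∈ ℱ 0 := by
                have := he x; rw [hx] at this; simpa using this
              have hstep : ∀ y : B, β (clsF (act (if deg x = 1 then e x else 0) (m x y)))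
                  (clsC (Pi.single y (1:H))) =
                  β (clsF (e x)) (cls (m x y) • clsC (Pi.single y (1:H))) := by
                intro y
                rw [if_pos hx]
                by_cases hy : deg y = 0
                · have hmxy : m x y ∈ ℛ 0 := by
                    have := hm_mem x y; rwa [hx, hy] at this
                  rw [hclsF_act _ hex _ hmxy, hβbal]
                · rw [m_le x y (by have := hdeg y; omega)]
                  simp [clsF_zero, β0l, β0r]
              rw [Finset.sum_congr rfl (fun y _ => hstep y), ← βsumr, Z x hx, β0r]
            · apply Finset.sum_eq_zero
              intro y _
              rw [if_neg hx, map_zero, LinearMap.zero_apply, clsF_zero, β0l]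
    -- Bm descends to T
    have Bm_eq : ∀ c c' : B → F,
        ((∀ x : B, c x ∈ ℱ (0 - deg x)) ∧ D c = 0) →
        ((∀ x : B, c' x ∈ ℱ (0 - deg x)) ∧ D c' = 0) →
        clsT c = clsT c' → Bm c = Bm c' := by
      intro c c' hc hc' hcl
      have h0 : clsT (c - c') = 0 := by
        have h := clsT_add_eq c c' hc hc'
        rw [hcl] at h
        exact (right_eq_add.mp h)
      obtain ⟨e, he, heq⟩ := (hclsT_ker _ (cyc_sub c c' hc hc')).mp h0
      have hcc : Bm c = Bm ((c - c') + c') := by rw [sub_add_cancel]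
      rw [hcc, Bm_add _ _ (cyc_sub c c' hc hc') hc', heq, Bm_bdry e he, zero_add]
    have hφadd : ∀ t t' : T, Bm (repT (t + t')) = Bm (repT t) + Bm (repT t') := by
      intro t t'
      have h1 : clsT (repT (t + t')) = clsT (repT t + repT t') := by
        rw [hrepTcls, hclsT_add _ _ (hrepTcyc t) (hrepTcyc t'), hrepTcls, hrepTcls]
      rw [Bm_eq _ _ (hrepTcyc _) (cyc_add _ _ (hrepTcyc t) (hrepTcyc t')) h1,
        Bm_add _ _ (hrepTcyc t) (hrepTcyc t')]
    have hφτ : ∀ (s : HF) (t : HC),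
        Bm (repT (clsT (fun y => if deg y = 0 then act (repF s) (repH (repC t y)) else 0)))
          = β s t := by
      intro s t
      have hcyc := chain_cyc (repF s) (fun y => repH (repC t y)) (hrepF0 s)
        (fun y => hrepH0 _)
      rw [Bm_eq _ _ (hrepTcyc _) hcyc (by rw [hrepTcls])]
      simp only [hBm]
      have h2 : ∀ x : B, β (clsF (if deg x = 0 then act (repF s) (repH (repC t x)) else 0))
          (clsC (Pi.single x (1:H))) = β s (repC t x • clsC (Pi.single x (1:H))) := by
        intro x
        by_cases hx : deg x = 0
        · rw [if_pos hx, hclsF_act _ (hrepF0 s) _ (hrepH0 _), hrepHcls, hrepFcls, hβbal]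
        · rw [if_neg hx, clsF_zero, β0l, hrepCsupp t x hx, zero_smul, β0r]
      rw [Finset.sum_congr rfl (fun x _ => h2 x), ← βsumr]
      congr 1
      have h3 : ∀ x : B, repC t x • clsC (Pi.single x (1:H)) =
          clsC (Pi.single x (repC t x)) := by
        intro x
        by_cases hx : deg x = 0
        · rw [← hclsC_smul (repC t x) (Pi.single x (1:H))
            (fun w hw => by rw [Pi.single_apply, if_neg (by rintro rfl; exact hw hx)])]
          congr 1
          funext w
          rw [Pi.single_apply, Pi.single_apply, mul_ite, mul_one, mul_zero]
        · rw [hrepCsupp t x hx, zero_smul, Pi.single_zero, clsC_zero]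
      have hsupp : ∀ i w : B, deg w ≠ 0 → (Pi.single i (repC t i) : B → H) w = 0 := by
        intro i w hw
        rw [Pi.single_apply]
        by_cases h : w = i
        · subst h; rw [if_pos rfl, hrepCsupp t w hw]
        · rw [if_neg h]
      rw [Finset.sum_congr rfl (fun x _ => h3 x), ← sumC Finset.univ _ hsupp,
        Finset.univ_sum_single, hrepCcls]
    refine ⟨AddMonoidHom.mk' (fun t => Bm (repT t)) hφadd, fun s t => hφτ s t, ?_⟩
    intro φ' hφ'
    apply AddMonoidHom.eq_of_eqOn_dense hspan
    rintro x ⟨s, t, rfl⟩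
    rw [hφ' s t]
    exact (hφτ s t).symm
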